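/- Suppose |u⁺| = c_s(ρ⁺), where ρ⁺ = (V⁺)². Then g(V⁺) = 0 and g'(V⁺) = 0, V⁺ is the unique zero of g on (0,∞), and g(V) > 0 for every V ∈ (0,∞) with V ≠ V⁺. -/

import Mathlib

open Real

/-- Enthalpy: `h(ρ) = ln ρ` if `γ = 1`, `h(ρ) = (γ/(γ-1)) ρ^(γ-1)` if `γ > 1`. -/
noncomputable def enth (γ ρ : ℝ) : ℝ :=
  if γ = 1 then Real.log ρ else (γ / (γ - 1)) * ρ ^ (γ - 1)

/-- Derivative of `V ↦ enth γ (V^2)` at a positive point. -/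
lemma enth_sq_hasDerivAt (γ : ℝ) (hγ : 1 ≤ γ) {V : ℝ} (hV : 0 < V) :
    HasDerivAt (fun x => enth γ (x ^ 2)) (2 * γ * V ^ (2 * γ - 3)) V := by
  rcases eq_or_lt_of_le hγ with h1 | h1
  · subst h1
    have hne : (V : ℝ) ^ 2 ≠ 0 := by positivity
    have hd := (hasDerivAt_pow 2 V).log hne
    have : (fun x : ℝ => enth 1 (x ^ 2)) = fun x => Real.log (x ^ 2) := by
      funext x; simp [enth]
    rw [this]
    convert hd using 1
    rw [show (2 * (1:ℝ) - 3) = -1 by norm_num, Real.rpow_neg_one]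
    push_cast
    field_simp
  · have hne : γ ≠ 1 := h1.ne'
    have hγ1 : γ - 1 ≠ 0 := sub_ne_zero.mpr hne
    have hev : (fun x : ℝ => (γ / (γ - 1)) * x ^ (2 * γ - 2)) =ᶠ[nhds V]
        fun x => enth γ (x ^ 2) := by
      filter_upwards [Ioi_mem_nhds hV] with x hx
      simp only [enth, if_neg hne]
      congr 1
      rw [← Real.rpow_natCast x 2, ← Real.rpow_mul (le_of_lt hx)]
      congr 1
      push_cast; ring
    have hd : HasDerivAt (fun x : ℝ => (γ / (γ - 1)) * x ^ (2 * γ - 2))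
        ((γ / (γ - 1)) * ((2 * γ - 2) * V ^ (2 * γ - 2 - 1))) V :=
      (Real.hasDerivAt_rpow_const (Or.inl hV.ne')).const_mul _
    have := hd.congr_of_eventuallyEq hev.symm
    refine this.congr_deriv (Eq.symm ?_)
    rw [show (2 * γ - 2 - 1) = 2 * γ - 3 by ring]
    field_simp

/-- In the sonic regime `|u⁺| = c_s(ρ⁺)` one has `g(V⁺) = 0`, `g'(V⁺) = 0`, `V⁺` is the
unique positive zero of `g`, and `g > 0` elsewhere on `(0,∞)`. -/
theorem sonic_structure_nonlinear_viscosity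
    (γ k Vp up : ℝ) (hγ : 1 ≤ γ) (hk : 0 < k) (hVp : 0 < Vp)
    (C₁ C₂ : ℝ) (hC₁ : C₁ = -up * Vp ^ 2)
    (hC₂ : C₂ = -up ^ 2 / 2 - enth γ (Vp ^ 2))
    (g : ℝ → ℝ)
    (hg : ∀ V : ℝ, 0 < V → g V = (C₁ ^ 2 / (2 * V ^ 4) + enth γ (V ^ 2) + C₂) * V)
    (hu : |up| = Real.sqrt (γ * (Vp ^ 2) ^ (γ - 1))) :
    g Vp = 0 ∧ deriv g Vp = 0 ∧
    (∀ V : ℝ, 0 < V → g V = 0 → V = Vp) ∧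
    (∀ V : ℝ, 0 < V → V ≠ Vp → 0 < g V) := by
  have hγ0 : (0:ℝ) < γ := lt_of_lt_of_le one_pos hγ
  set φ : ℝ → ℝ := fun V => C₁ ^ 2 / 2 * (V ^ 4)⁻¹ + enth γ (V ^ 2) + C₂ with hφdef
  -- g = φ · V on (0, ∞)
  have hgφ : ∀ V : ℝ, 0 < V → g V = φ V * V := by
    intro V hV
    rw [hg V hV, hφdef]
    ring_nf
  -- up² in terms of γ, Vp
  have hup2 : up ^ 2 = γ * (Vp ^ 2) ^ (γ - 1) := by
    have h0 : 0 ≤ γ * (Vp ^ 2) ^ (γ - 1) := by positivity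
    calc up ^ 2 = |up| ^ 2 := (sq_abs up).symm
    _ = γ * (Vp ^ 2) ^ (γ - 1) := by rw [hu, sq_sqrt h0]
  have hCup : C₁ ^ 2 = up ^ 2 * Vp ^ 4 := by rw [hC₁]; ring
  have hC1sq : C₁ ^ 2 = γ * Vp ^ (2 * γ + 2) := by
    rw [hCup, hup2]
    rw [← Real.rpow_natCast Vp 2, ← Real.rpow_mul hVp.le, mul_assoc,
      ← Real.rpow_natCast Vp 4, ← Real.rpow_add hVp]
    congr 1
    push_cast; ring
  -- φ(Vp) = 0
  have hφVp : φ Vp = 0 := by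
    rw [hφdef]
    simp only
    rw [hCup, hC₂]
    have : Vp ^ 4 ≠ 0 := by positivity
    field_simp
    ring
  -- derivative of φ
  set D : ℝ → ℝ := fun V => 2 * γ / V ^ 5 * (V ^ (2 * γ + 2) - Vp ^ (2 * γ + 2)) with hDdef
  have hφ' : ∀ V : ℝ, 0 < V → HasDerivAt φ (D V) V := by
    intro V hV
    have h4 : (V : ℝ) ^ 4 ≠ 0 := by positivity
    have t1 := ((hasDerivAt_pow 4 V).inv h4).const_mul (C₁ ^ 2 / 2)
    have t2 := enth_sq_hasDerivAt γ hγ hV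
    have := (t1.add t2).add_const C₂
    refine this.congr_deriv (Eq.symm ?_)
    have hpow : V ^ (2 * γ + 2) = V ^ (2 * γ - 3) * V ^ 5 := by
      rw [← Real.rpow_natCast V 5, ← Real.rpow_add hV]
      congr 1; push_cast; ring
    rw [hDdef]
    simp only
    rw [hpow, hC1sq]
    set P := V ^ (2 * γ - 3)
    set A := Vp ^ (2 * γ + 2)
    push_cast
    field_simp
    ring
  -- sign of D
  have hDneg : ∀ V : ℝ, 0 < V → V < Vp → D V < 0 := by
    intro V hV hlt
    apply mul_neg_of_pos_of_neg
    · positivity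
    · have : V ^ (2 * γ + 2) < Vp ^ (2 * γ + 2) :=
        Real.rpow_lt_rpow hV.le hlt (by linarith)
      linarith
  have hDpos : ∀ V : ℝ, Vp < V → 0 < D V := by
    intro V hlt
    have hV : 0 < V := lt_trans hVp hlt
    apply mul_pos
    · positivity
    · have : Vp ^ (2 * γ + 2) < V ^ (2 * γ + 2) :=
        Real.rpow_lt_rpow hVp.le hlt (by linarith)
      linarith
  -- strict monotonicity of φ
  have hcont : ∀ s : Set ℝ, s ⊆ Set.Ioi 0 → ContinuousOn φ s := by
    intro s hs x hx
    exact ((hφ' x (hs hx)).continuousAt).continuousWithinAt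
  have hanti : StrictAntiOn φ (Set.Ioc 0 Vp) := by
    apply strictAntiOn_of_deriv_neg (convex_Ioc 0 Vp)
      (hcont _ Set.Ioc_subset_Ioi_self)
    intro x hx
    rw [interior_Ioc] at hx
    rw [(hφ' x hx.1).deriv]
    exact hDneg x hx.1 hx.2
  have hmono : StrictMonoOn φ (Set.Ici Vp) := by
    apply strictMonoOn_of_deriv_pos (convex_Ici Vp)
      (hcont _ (fun x hx => lt_of_lt_of_le hVp hx))
    intro x hx
    rw [interior_Ici] at hx
    rw [(hφ' x (lt_trans hVp hx)).deriv]
    exact hDpos x hx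
  -- φ > 0 away from Vp
  have hφpos : ∀ V : ℝ, 0 < V → V ≠ Vp → 0 < φ V := by
    intro V hV hne
    rcases lt_or_gt_of_ne hne with hlt | hgt
    · have := hanti (Set.mem_Ioc.mpr ⟨hV, hlt.le⟩)
        (Set.mem_Ioc.mpr ⟨hVp, le_refl Vp⟩) hlt
      rwa [hφVp] at this
    · have := hmono (Set.mem_Ici.mpr (le_refl Vp))
        (Set.mem_Ici.mpr hgt.le) hgt
      rwa [hφVp] at this
  refine ⟨?_, ?_, ?_, ?_⟩
  · rw [hgφ Vp hVp, hφVp, zero_mul]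
  · have heq : g =ᶠ[nhds Vp] fun V => φ V * V := by
      filter_upwards [Ioi_mem_nhds hVp] with V hV
      exact hgφ V hV
    have hmul : HasDerivAt (fun V => φ V * V) (D Vp * Vp + φ Vp * 1) Vp := by
      exact (hφ' Vp hVp).mul (hasDerivAt_id Vp)
    rw [heq.deriv_eq, hmul.deriv, hφVp, hDdef]
    simp
  · intro V hV hzero
    by_contra hne
    have := hφpos V hV hne
    have hpos : 0 < φ V * V := mul_pos this hV
    rw [← hgφ V hV, hzero] at hpos
    exact lt_irrefl 0 hpos
  · intro V hV hne
    rw [hgφ V hV]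
    exact mul_pos (hφpos V hV hne) hV
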